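/- Let G be a group with subgroups A, B ≤ G such that B normalizes A, A ∩ B = {e}, and G = AB (inner semidirect product G = [AB]), and let φ_A : G → A, φ_B : G → B be the maps assigning to each g ∈ G the unique a ∈ A and b ∈ B with g = a·b. Then for every atomic subset S ⊆ G and every g ∈ ⟨S⟩, one has φ_A(g) ∈ ⟨(S ∩ A)^{⟨S ∩ B⟩}⟩ and φ_B(g) ∈ ⟨S ∩ B⟩, where (S ∩ A)^{⟨S ∩ B⟩} := { b a b⁻¹ : a ∈ S ∩ A, b ∈ ⟨S ∩ B⟩ }. -/

import Mathlib

/-- Let `G = [AB]` be an inner semidirect product of subgroups `A, B ≤ G`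
(`B` normalizes `A`, `A ∩ B = {e}`, `G = AB`), and let `φA, φB` assign to each `g ∈ G`
the unique `a ∈ A` and `b ∈ B` with `g = a * b`.  Then for every atomic subset `S ⊆ G`
(i.e. `S ⊆ A ∪ B`) and every `g ∈ ⟨S⟩`, one has
`φA g ∈ ⟨(S ∩ A)^{⟨S ∩ B⟩}⟩` and `φB g ∈ ⟨S ∩ B⟩`. -/
theorem stmt_0 {G : Type*} [Group G] (A B : Subgroup G)
    (hnorm : B ≤ Subgroup.normalizer (A : Set G))
    (hint : A ⊓ B = ⊥)
    (hprod : ∀ g : G, ∃ a ∈ A, ∃ b ∈ B, g = a * b)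
    (φA φB : G → G)
    (hφ : ∀ g : G, φA g ∈ A ∧ φB g ∈ B ∧ g = φA g * φB g)
    (S : Set G) (hS : S ⊆ (A : Set G) ∪ (B : Set G)) :
    ∀ g ∈ Subgroup.closure S,
      φA g ∈ Subgroup.closure
          {x | ∃ a ∈ S ∩ (A : Set G), ∃ b ∈ Subgroup.closure (S ∩ (B : Set G)),
            x = b * a * b⁻¹} ∧
      φB g ∈ Subgroup.closure (S ∩ (B : Set G)) := by
  classical
  set K := Subgroup.closure (S ∩ (B : Set G)) with hKdef
  set T : Set G := {x | ∃ a ∈ S ∩ (A : Set G), ∃ b ∈ K, x = b * a * b⁻¹} with hTdef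
  set H := Subgroup.closure T with hHdef
  have hKB : K ≤ B := (Subgroup.closure_le _).2 Set.inter_subset_right
  have hHA : H ≤ A := by
    apply (Subgroup.closure_le _).2
    rintro x ⟨a, ⟨_, haA⟩, b, hbK, rfl⟩
    exact (hnorm (hKB hbK) a).1 haA
  -- uniqueness of factorization
  have huniq : ∀ a a' b b' : G, a ∈ A → a' ∈ A → b ∈ B → b' ∈ B →
      a * b = a' * b' → a = a' ∧ b = b' := by
    intro a a' b b' ha ha' hb hb' h
    have h1 : a'⁻¹ * a = b' * b⁻¹ := by
      have := congrArg (fun z => a'⁻¹ * z * b⁻¹) h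
      simpa [mul_assoc] using this
    have h2 : a'⁻¹ * a ∈ A ⊓ B := Subgroup.mem_inf.mpr
      ⟨mul_mem (inv_mem ha') ha, h1 ▸ mul_mem hb' (inv_mem hb)⟩
    rw [hint, Subgroup.mem_bot] at h2
    have ha2 : a = a' := by
      have := congrArg (a' * ·) h2
      simp only [mul_one] at this
      rw [← mul_assoc, mul_inv_cancel, one_mul] at this
      exact this
    refine ⟨ha2, ?_⟩
    rw [ha2] at h
    exact mul_left_cancel h
  -- H is closed under conjugation by elements of K
  have hconj : ∀ b ∈ K, ∀ h ∈ H, b * h * b⁻¹ ∈ H := by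
    intro b hb h hh
    induction hh using Subgroup.closure_induction with
    | mem x hx =>
        obtain ⟨a, haS, c, hcK, rfl⟩ := hx
        apply Subgroup.subset_closure
        exact ⟨a, haS, b * c, mul_mem hb hcK, by group⟩
    | one => simpa using one_mem H
    | mul x y hx hy px py =>
        have : b * (x * y) * b⁻¹ = (b * x * b⁻¹) * (b * y * b⁻¹) := by group
        rw [this]; exact mul_mem px py
    | inv x hx px =>
        have : b * x⁻¹ * b⁻¹ = (b * x * b⁻¹)⁻¹ := by group
        rw [this]; exact inv_mem px
  intro g hg
  induction hg using Subgroup.closure_induction with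
  | mem s hs =>
      rcases hS hs with hsA | hsB
      · have h1 : φA s * φB s = s * 1 := by rw [mul_one, ← (hφ s).2.2]
        obtain ⟨hA, hB⟩ := huniq _ _ _ _ (hφ s).1 hsA (hφ s).2.1 (one_mem B) h1
        constructor
        · rw [hA]
          exact Subgroup.subset_closure ⟨s, ⟨hs, hsA⟩, 1, one_mem K, by group⟩
        · rw [hB]; exact one_mem K
      · have h1 : φA s * φB s = 1 * s := by rw [one_mul, ← (hφ s).2.2]
        obtain ⟨hA, hB⟩ := huniq _ _ _ _ (hφ s).1 (one_mem A) (hφ s).2.1 hsB h1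
        constructor
        · rw [hA]; exact one_mem H
        · rw [hB]; exact Subgroup.subset_closure ⟨hs, hsB⟩
  | one =>
      have h1 : φA 1 * φB 1 = 1 * 1 := by rw [mul_one, ← (hφ 1).2.2]
      obtain ⟨hA, hB⟩ := huniq _ _ _ _ (hφ 1).1 (one_mem A) (hφ 1).2.1 (one_mem B) h1
      rw [hA, hB]; exact ⟨one_mem H, one_mem K⟩
  | mul x y hx hy px py =>
      obtain ⟨pxA, pxB⟩ := px
      obtain ⟨pyA, pyB⟩ := py
      have hx2 := hφ x
      have hy2 := hφ y
      have hxy := hφ (x * y)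
      have key : φA (x * y) * φB (x * y)
          = (φA x * (φB x * φA y * (φB x)⁻¹)) * (φB x * φB y) := by
        calc φA (x * y) * φB (x * y) = x * y := hxy.2.2.symm
          _ = (φA x * φB x) * (φA y * φB y) := by rw [← hx2.2.2, ← hy2.2.2]
          _ = _ := by group
      have hmemA : φA x * (φB x * φA y * (φB x)⁻¹) ∈ A :=
        mul_mem hx2.1 ((hnorm hx2.2.1 _).1 hy2.1)
      obtain ⟨hA, hB⟩ := huniq _ _ _ _ hxy.1 hmemA hxy.2.1
        (mul_mem hx2.2.1 hy2.2.1) key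
      constructor
      · rw [hA]; exact mul_mem pxA (hconj _ pxB _ pyA)
      · rw [hB]; exact mul_mem pxB pyB
  | inv x hx px =>
      obtain ⟨pxA, pxB⟩ := px
      have hx2 := hφ x
      have hxi := hφ x⁻¹
      have key : φA x⁻¹ * φB x⁻¹
          = ((φB x)⁻¹ * (φA x)⁻¹ * ((φB x)⁻¹)⁻¹) * (φB x)⁻¹ := by
        calc φA x⁻¹ * φB x⁻¹ = x⁻¹ := hxi.2.2.symm
          _ = (φA x * φB x)⁻¹ := by rw [← hx2.2.2]
          _ = _ := by group
      have hmemA : (φB x)⁻¹ * (φA x)⁻¹ * ((φB x)⁻¹)⁻¹ ∈ A :=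
        (hnorm (inv_mem hx2.2.1) (φA x)⁻¹).1 (inv_mem hx2.1)
      obtain ⟨hA, hB⟩ := huniq _ _ _ _ hxi.1 hmemA hxi.2.1 (inv_mem hx2.2.1) key
      constructor
      · rw [hA]; exact hconj _ (inv_mem pxB) _ (inv_mem pxA)
      · rw [hB]; exact inv_mem pxB
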